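/- The twisted first-order condition holds for the Yukawa part of the Dirac operator: for all elements a, b of the twisted algebra, [[γ⁵⊗D_Y, π(b)]_ρ, a°]_{ρ°} = 0, where a° := J·π(a)†·J⁻¹, ρ°(a°) := J·π(ρ(a))†·J⁻¹, and [T, a°]_{ρ°} := T·a° − ρ°(a°)·T. -/

import Mathlib

open Matrix

noncomputable section

namespace TwistSM

/-! ### Dirac matrices -/

def pauli1 : Matrix (Fin 2) (Fin 2) ℂ := !![0, 1; 1, 0]
def pauli2 : Matrix (Fin 2) (Fin 2) ℂ := !![0, -Complex.I; Complex.I, 0]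
def pauli3 : Matrix (Fin 2) (Fin 2) ℂ := !![1, 0; 0, -1]

/-- σ^μ = (I₂, −iσ₁, −iσ₂, −iσ₃) -/
def sigE : Fin 4 → Matrix (Fin 2) (Fin 2) ℂ :=
  ![1, (-Complex.I) • pauli1, (-Complex.I) • pauli2, (-Complex.I) • pauli3]
/-- σ̃^μ = (I₂, iσ₁, iσ₂, iσ₃) -/
def sigTE : Fin 4 → Matrix (Fin 2) (Fin 2) ℂ :=
  ![1, Complex.I • pauli1, Complex.I • pauli2, Complex.I • pauli3]

/-- Diagonal 2×2 block matrix [[A,0],[0,B]] over a leading `Fin 2` index. -/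
def dgB {m : Type} (A B : Matrix m m ℂ) : Matrix (Fin 2 × m) (Fin 2 × m) ℂ :=
  Matrix.of fun p q =>
    if p.1 = q.1 then (if p.1 = 0 then A p.2 q.2 else B p.2 q.2) else 0

/-- Off-diagonal 2×2 block matrix [[0,A],[B,0]] over a leading `Fin 2` index. -/
def odB {m : Type} (A B : Matrix m m ℂ) : Matrix (Fin 2 × m) (Fin 2 × m) ℂ :=
  Matrix.of fun p q =>
    if p.1 = 0 then (if q.1 = 0 then 0 else A p.2 q.2)
    else (if q.1 = 0 then B p.2 q.2 else 0)

/-- Euclidean Dirac matrices γ^μ_E = [[0, σ^μ],[σ̃^μ, 0]], acting on the spinor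
indices (s, ṡ). -/
def gammaE (μ : Fin 4) : Matrix (Fin 2 × Fin 2) (Fin 2 × Fin 2) ℂ := odB (sigE μ) (sigTE μ)

/-- Entrywise complex conjugation of a matrix. -/
def mconj {m n : Type} (A : Matrix m n ℂ) : Matrix m n ℂ := A.map (starRingEnd ℂ)

/-- C = i γ⁰_E γ²_E (the matrix part of the charge conjugation 𝒥 = C ∘ cc). -/
def Kspin : Matrix (Fin 2 × Fin 2) (Fin 2 × Fin 2) ℂ := Complex.I • (gammaE 0 * gammaE 2)

/-! ### The twisted algebra and its representation on ℂ¹²⁸ -/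

/-- Quaternionic 2×2 matrices: of the form [[α,β],[−conj β, conj α]]. -/
def IsQuat (q : Matrix (Fin 2) (Fin 2) ℂ) : Prop :=
  q 1 0 = -(starRingEnd ℂ) (q 0 1) ∧ q 1 1 = (starRingEnd ℂ) (q 0 0)

/-- An element (c, c', q, q', m, m') of the twisted algebra. -/
structure Alg : Type where
  c : ℂ
  c' : ℂ
  q : Matrix (Fin 2) (Fin 2) ℂ
  q' : Matrix (Fin 2) (Fin 2) ℂ
  m : Matrix (Fin 3) (Fin 3) ℂ
  m' : Matrix (Fin 3) (Fin 3) ℂ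
  hq : IsQuat q
  hq' : IsQuat q'

/-- The twist ρ: exchange primed and unprimed entries. -/
def Alg.rho (a : Alg) : Alg := ⟨a.c', a.c, a.q', a.q, a.m', a.m, a.hq', a.hq⟩

/-- Flavour index α, as a pair (flavour pair, index within the pair):
(0,0) = 1̇, (0,1) = 2̇, (1,0) = 1, (1,1) = 2. -/
abbrev Flav : Type := Fin 2 × Fin 2
/-- Internal index (I, α): lepto-colour I ∈ Fin 4 and flavour α. -/
abbrev Intl : Type := Fin 4 × Flav
/-- (ṡ, (I, α)) -/
abbrev HalfNoS : Type := Fin 2 × Intl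
/-- Half of the full space: (s, ṡ, (I, α)). -/
abbrev Half : Type := Fin 2 × HalfNoS
/-- ℂ¹²⁸, indexed by (C, s, ṡ, (I, α)). -/
abbrev Full : Type := Fin 2 × Half

/-- diag(c, conj c) as a 2×2 matrix. -/
def cdiag (c : ℂ) : Matrix (Fin 2) (Fin 2) ℂ := Matrix.diagonal ![c, (starRingEnd ℂ) c]

def pred3 (i : Fin 4) : Fin 3 := ⟨i.val - 1, by have := i.isLt; omega⟩

/-- diag(c, m) as a 4×4 matrix on the lepto-colour index. -/
def sm4 (c : ℂ) (m : Matrix (Fin 3) (Fin 3) ℂ) : Matrix (Fin 4) (Fin 4) ℂ :=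
  Matrix.of fun i j =>
    if i = 0 then (if j = 0 then c else 0)
    else if j = 0 then 0 else m (pred3 i) (pred3 j)

/-- Q_r = diag(c, conj c, q') on the flavour index. -/
def Qr (a : Alg) : Matrix Flav Flav ℂ := dgB (cdiag a.c) a.q'
/-- Q_l = diag(c', conj c', q) on the flavour index. -/
def Ql (a : Alg) : Matrix Flav Flav ℂ := dgB (cdiag a.c') a.q

/-- diag_α(A⊗I₂, B⊗I₂) on (I, α). -/
def msect (A B : Matrix (Fin 4) (Fin 4) ℂ) : Matrix Intl Intl ℂ :=
  Matrix.of fun p q =>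
    if p.2 = q.2 then (if p.2.1 = 0 then A p.1 q.1 else B p.1 q.1) else 0

/-- M_r = diag_α(𝗆⊗I₂, 𝗆'⊗I₂). -/
def Mr (a : Alg) : Matrix Intl Intl ℂ := msect (sm4 a.c a.m) (sm4 a.c' a.m')
/-- M_l = diag_α(𝗆'⊗I₂, 𝗆⊗I₂). -/
def Ml (a : Alg) : Matrix Intl Intl ℂ := msect (sm4 a.c' a.m') (sm4 a.c a.m)

/-- Lift a flavour matrix to (ṡ, (I, α)), acting trivially on ṡ and I. -/
def liftQ (X : Matrix Flav Flav ℂ) : Matrix HalfNoS HalfNoS ℂ :=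
  Matrix.of fun p q => if p.1 = q.1 ∧ p.2.1 = q.2.1 then X p.2.2 q.2.2 else 0

/-- Lift a matrix on (I, α) to (ṡ, (I, α)), acting trivially on ṡ. -/
def liftI (X : Matrix Intl Intl ℂ) : Matrix HalfNoS HalfNoS ℂ :=
  Matrix.of fun p q => if p.1 = q.1 then X p.2 q.2 else 0

/-- The Q-block of the representation: diag_s(Q_r, Q_l), trivial on ṡ and I. -/
def Qmat (a : Alg) : Matrix Half Half ℂ := dgB (liftQ (Qr a)) (liftQ (Ql a))
/-- The M-block of the representation: diag_s(M_r, M_l), trivial on ṡ. -/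
def Mmat (a : Alg) : Matrix Half Half ℂ := dgB (liftI (Mr a)) (liftI (Ml a))

/-- The representation π(a) = diag_C(Q, M) of the twisted algebra on ℂ¹²⁸. -/
def rep (a : Alg) : Matrix Full Full ℂ := dgB (Qmat a) (Mmat a)

/-- Twisted commutator [T, π(b)]_ρ = T·π(b) − π(ρ(b))·T. -/
def tcomm (T : Matrix Full Full ℂ) (b : Alg) : Matrix Full Full ℂ :=
  T * rep b - rep b.rho * T

/-- K = (i γ⁰_E γ²_E) ⊗ ξ ⊗ I₁₆ (with ξ on the internal index C);
the real structure is J = K ∘ cc. -/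
def Kmat : Matrix Full Full ℂ :=
  Matrix.of fun p q =>
    (!![0, 1; 1, 0] : Matrix (Fin 2) (Fin 2) ℂ) p.1 q.1 *
      Kspin (p.2.1, p.2.2.1) (q.2.1, q.2.2.1) *
      (if p.2.2.2 = q.2.2.2 then 1 else 0)

/-- J T J⁻¹ = −K · conj(T) · conj(K) as a matrix operation. -/
def Jconj (T : Matrix Full Full ℂ) : Matrix Full Full ℂ := -(Kmat * mconj T * mconj Kmat)

/-! ### Yukawa and Majorana parts of the Dirac operator -/

/-- 𝗄^I = diag(k_u^I, k_d^I). -/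
def kdiag (kν ke ku kd : ℂ) (i : Fin 4) : Matrix (Fin 2) (Fin 2) ℂ :=
  if i = 0 then Matrix.diagonal ![kν, ke] else Matrix.diagonal ![ku, kd]

/-- Block-diagonal matrix on (I, α) from a family of flavour matrices. -/
def diagI (F : Fin 4 → Matrix Flav Flav ℂ) : Matrix Intl Intl ℂ :=
  Matrix.of fun p q => if p.1 = q.1 then F p.1 p.2 q.2 else 0

/-- The Yukawa mass matrix D₀ = diag_I(D₀^I), D₀^I = [[0, conj 𝗄^I],[𝗄^I, 0]]. -/
def D0 (kν ke ku kd : ℂ) : Matrix Intl Intl ℂ :=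
  diagI fun i => odB (mconj (kdiag kν ke ku kd i)) (kdiag kν ke ku kd i)

/-- η ⊗ X, with η = diag_s(1,−1) ⊗ I₂ on (s, ṡ) and X on (I, α). -/
def etaD (X : Matrix Intl Intl ℂ) : Matrix Half Half ℂ := dgB (liftI X) (liftI (-X))

/-- γ⁵ ⊗ D_Y = diag_C(η⊗D₀, η⊗D₀†). -/
def g5DY (kν ke ku kd : ℂ) : Matrix Full Full ℂ :=
  dgB (etaD (D0 kν ke ku kd)) (etaD ((D0 kν ke ku kd)ᴴ))

/-- Ξ = diag(1,0,0,0)_I ⊗ diag(1,0,0,0)_α on (I, α). -/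
def XiI : Matrix Intl Intl ℂ :=
  Matrix.of fun p q =>
    if p = q ∧ p.1 = 0 ∧ p.2 = ((0 : Fin 2), (0 : Fin 2)) then 1 else 0

/-- γ⁵ ⊗ D_M = [[0, η⊗D_R],[η⊗D_R†, 0]]_C with D_R = k_R Ξ. -/
def g5DM (kR : ℂ) : Matrix Full Full ℂ :=
  odB (etaD (kR • XiI)) (etaD ((kR • XiI)ᴴ))

/-! ### The free 1-form -/

/-- Lift a spinor matrix (on (s, ṡ)) to ℂ¹²⁸, identity on C and (I, α). -/
def liftSpin (G : Matrix (Fin 2 × Fin 2) (Fin 2 × Fin 2) ℂ) : Matrix Full Full ℂ :=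
  Matrix.of fun p q =>
    (if p.1 = q.1 ∧ p.2.2.2 = q.2.2.2 then 1 else 0) * G (p.2.1, p.2.2.1) (q.2.1, q.2.2.1)

/-- Q_μ = diag_s(Q^r_μ, Q^l_μ), Q^{r/l}_μ = diag(c^{r/l}, conj c^{r/l}, q^{r/l}),
trivial on ṡ and I. -/
def freeQ (cr cl : ℂ) (qr ql : Matrix (Fin 2) (Fin 2) ℂ) : Matrix Half Half ℂ :=
  dgB (liftQ (dgB (cdiag cr) qr)) (liftQ (dgB (cdiag cl) ql))

/-- M_μ = diag_s(M^r_μ, M^l_μ), M^r_μ = diag_α(𝗆^r⊗I₂, 𝗆^l⊗I₂), 𝗆^{r/l} = diag(c^{r/l}, m^{r/l}),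
trivial on ṡ. -/
def freeM (cr cl : ℂ) (mr ml : Matrix (Fin 3) (Fin 3) ℂ) : Matrix Half Half ℂ :=
  dgB (liftI (msect (sm4 cr mr) (sm4 cl ml))) (liftI (msect (sm4 cl ml) (sm4 cr mr)))

/-- The free 1-form coefficient matrix A_μ = diag_C(Q_μ, M_μ). -/
def freeA (cr cl : ℂ) (qr ql : Matrix (Fin 2) (Fin 2) ℂ)
    (mr ml : Matrix (Fin 3) (Fin 3) ℂ) : Matrix Full Full ℂ :=
  dgB (freeQ cr cl qr ql) (freeM cr cl mr ml)

/-! ### Partial derivatives -/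

/-- Partial derivative in the μ-th coordinate direction of ℝ⁴ (ℂ-valued). -/
def pdC (μ : Fin 4) (f : (Fin 4 → ℝ) → ℂ) (x : Fin 4 → ℝ) : ℂ :=
  fderiv ℝ f x (Pi.single μ 1)

/-- Partial derivative in the μ-th coordinate direction of ℝ⁴ (ℝ-valued). -/
def pdR (μ : Fin 4) (f : (Fin 4 → ℝ) → ℝ) (x : Fin 4 → ℝ) : ℝ :=
  fderiv ℝ f x (Pi.single μ 1)

/-- Entrywise partial derivative of a matrix-valued function. -/
def pdM {m n : Type} (μ : Fin 4) (F : (Fin 4 → ℝ) → Matrix m n ℂ) (x : Fin 4 → ℝ) :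
    Matrix m n ℂ :=
  Matrix.of fun i j => pdC μ (fun y => F y i j) x


/-! ### Auxiliary Kronecker infrastructure -/

/-- The external index (C, s, ṡ). -/
abbrev EIdx : Type := Fin 2 × Fin 2 × Fin 2

def eqFull : (EIdx × Intl) ≃ Full where
  toFun := fun x => (x.1.1, (x.1.2.1, (x.1.2.2, x.2)))
  invFun := fun p => ((p.1, p.2.1, p.2.2.1), p.2.2.2)
  left_inv := fun _ => rfl
  right_inv := fun _ => rfl

open Kronecker in
/-- Kronecker product of an external and an internal matrix, reindexed to `Full`. -/
def kron (A : Matrix EIdx EIdx ℂ) (B : Matrix Intl Intl ℂ) : Matrix Full Full ℂ :=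
  Matrix.reindex eqFull eqFull (A ⊗ₖ B)

lemma kron_apply (A : Matrix EIdx EIdx ℂ) (B : Matrix Intl Intl ℂ) (p q : Full) :
    kron A B p q
      = A (p.1, p.2.1, p.2.2.1) (q.1, q.2.1, q.2.2.1) * B p.2.2.2 q.2.2.2 := rfl

lemma kron_mul (A A' : Matrix EIdx EIdx ℂ) (B B' : Matrix Intl Intl ℂ) :
    kron A B * kron A' B' = kron (A * A') (B * B') := by
  unfold kron
  simp only [Matrix.reindex_apply]
  rw [Matrix.submatrix_mul_equiv, Matrix.mul_kronecker_mul]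

lemma kron_add (A A' : Matrix EIdx EIdx ℂ) (B B' : Matrix Intl Intl ℂ) :
    kron A (B + B') = kron A B + kron A B' := by
  ext p q; simp [kron_apply, Matrix.add_apply, mul_add]

lemma kron_sub (A : Matrix EIdx EIdx ℂ) (B B' : Matrix Intl Intl ℂ) :
    kron A (B - B') = kron A B - kron A B' := by
  ext p q; simp [kron_apply, Matrix.sub_apply, mul_sub]

lemma kron_zero (A : Matrix EIdx EIdx ℂ) : kron A (0 : Matrix Intl Intl ℂ) = 0 := by
  ext p q; simp [kron_apply]

lemma zero_kron (B : Matrix Intl Intl ℂ) : kron (0 : Matrix EIdx EIdx ℂ) B = 0 := by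
  ext p q; simp [kron_apply]

lemma neg_kron (A : Matrix EIdx EIdx ℂ) (B : Matrix Intl Intl ℂ) :
    kron (-A) B = -kron A B := by
  ext p q; simp [kron_apply]

lemma kron_conjT (A : Matrix EIdx EIdx ℂ) (B : Matrix Intl Intl ℂ) :
    (kron A B)ᴴ = kron Aᴴ Bᴴ := by
  ext p q
  simp [kron_apply, Matrix.conjTranspose_apply, _root_.map_mul]

lemma mconj_kron (A : Matrix EIdx EIdx ℂ) (B : Matrix Intl Intl ℂ) :
    mconj (kron A B) = kron (mconj A) (mconj B) := by
  ext p q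
  simp [kron_apply, mconj, _root_.map_mul]

lemma mconj_add {m n : Type} (A B : Matrix m n ℂ) :
    mconj (A + B) = mconj A + mconj B := by
  ext p q; simp [mconj]

lemma mconj_one : mconj (1 : Matrix Intl Intl ℂ) = 1 := by
  ext p q
  simp [mconj, Matrix.one_apply, apply_ite (starRingEnd ℂ)]

lemma mconj_conjT {m : Type} (A : Matrix m m ℂ) : mconj (Aᴴ) = Aᵀ := by
  ext p q; simp [mconj, Matrix.conjTranspose_apply, Matrix.transpose_apply]
/-! ### External projectors and the charge-conjugation matrix -/

open Kronecker

/-- Projector on C = c, s = s (identity on ṡ). -/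
def PE (c s : Fin 2) : Matrix EIdx EIdx ℂ :=
  Matrix.diagonal fun e => if e.1 = c ∧ e.2.1 = s then 1 else 0

lemma PE_mul (c s c' s' : Fin 2) :
    PE c s * PE c' s' = if c = c' ∧ s = s' then PE c s else 0 := by
  by_cases h : c = c' ∧ s = s'
  · rw [if_pos h]
    obtain ⟨rfl, rfl⟩ := h
    unfold PE
    rw [Matrix.diagonal_mul_diagonal]
    have hfun : (fun e : EIdx => (if e.1 = c ∧ e.2.1 = s then (1:ℂ) else 0) *
        (if e.1 = c ∧ e.2.1 = s then 1 else 0))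
        = fun e : EIdx => if e.1 = c ∧ e.2.1 = s then (1:ℂ) else 0 := by
      funext e; by_cases he : e.1 = c ∧ e.2.1 = s <;> simp [he]
    rw [hfun]
  · rw [if_neg h]
    unfold PE
    rw [Matrix.diagonal_mul_diagonal]
    have hfun : (fun e : EIdx => (if e.1 = c ∧ e.2.1 = s then (1:ℂ) else 0) *
        (if e.1 = c' ∧ e.2.1 = s' then 1 else 0)) = fun _ : EIdx => (0:ℂ) := by
      funext e
      by_cases h1 : e.1 = c ∧ e.2.1 = s
      · rw [if_pos h1, one_mul, if_neg]
        rintro ⟨hc, hs⟩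
        exact h ⟨h1.1.symm.trans hc, h1.2.symm.trans hs⟩
      · rw [if_neg h1, zero_mul]
    rw [hfun, Matrix.diagonal_zero]

lemma PE_conjT (c s : Fin 2) : (PE c s)ᴴ = PE c s := by
  ext p q
  by_cases h : p = q
  · subst h
    simp [PE, Matrix.conjTranspose_apply, Matrix.diagonal_apply_eq,
      apply_ite (starRingEnd ℂ)]
  · rw [Matrix.conjTranspose_apply, PE, Matrix.diagonal_apply_ne' _ h,
      Matrix.diagonal_apply_ne _ h]
    simp

lemma mconj_PE (c s : Fin 2) : mconj (PE c s) = PE c s := by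
  ext p q
  by_cases h : p = q
  · subst h
    simp [mconj, PE, Matrix.diagonal_apply_eq, apply_ite (starRingEnd ℂ)]
  · rw [mconj, Matrix.map_apply, PE, Matrix.diagonal_apply_ne _ h]
    simp

/-- The external part of K: ξ on C, Kspin on (s, ṡ). -/
def KE : Matrix EIdx EIdx ℂ :=
  (!![0, 1; 1, 0] : Matrix (Fin 2) (Fin 2) ℂ) ⊗ₖ Kspin

lemma Kmat_eq : Kmat = kron KE 1 := by
  ext p q
  simp only [Kmat, kron_apply, KE, Matrix.of_apply, Matrix.one_apply,
    Matrix.kroneckerMap_apply]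

lemma odB_mul_odB {m : Type} [Fintype m] [DecidableEq m] (A B C D : Matrix m m ℂ) :
    odB A B * odB C D = dgB (A * D) (B * C) := by
  ext p q
  rw [Matrix.mul_apply, Fintype.sum_prod_type, Fin.sum_univ_two]
  obtain ⟨i, x⟩ := p; obtain ⟨j, y⟩ := q
  fin_cases i <;> fin_cases j <;>
    simp [odB, dgB, Matrix.mul_apply]

lemma Kspin_eq : Kspin = dgB ((-1 : ℂ) • pauli2) pauli2 := by
  unfold Kspin gammaE
  rw [odB_mul_odB]
  have h1 : sigE 0 * sigTE 2 = Complex.I • pauli2 := by simp [sigE, sigTE]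
  have h2 : sigTE 0 * sigE 2 = (-Complex.I) • pauli2 := by simp [sigE, sigTE]
  rw [h1, h2]
  ext p q
  simp only [Matrix.smul_apply, dgB, Matrix.of_apply]
  split_ifs <;>
    simp [smul_eq_mul, mul_neg, neg_mul, ← mul_assoc, Complex.I_mul_I, neg_neg]

/-- 2×2 projector on index c. -/
def Ec (c : Fin 2) : Matrix (Fin 2) (Fin 2) ℂ :=
  Matrix.diagonal fun i => if i = c then 1 else 0

/-- 4×4 projector on s (identity on ṡ). -/
def Ps (s : Fin 2) : Matrix (Fin 2 × Fin 2) (Fin 2 × Fin 2) ℂ :=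
  Matrix.diagonal fun x => if x.1 = s then 1 else 0

lemma PE_eq (c s : Fin 2) : PE c s = Ec c ⊗ₖ Ps s := by
  ext p q
  obtain ⟨a1, a2⟩ := p; obtain ⟨b1, b2⟩ := q
  by_cases h1 : a1 = b1 <;> by_cases h2 : a2 = b2 <;>
    simp [PE, Ec, Ps, Matrix.kroneckerMap_apply, Matrix.diagonal_apply,
      Prod.ext_iff, h1, h2] <;>
    aesop

lemma mconj_kronecker (X : Matrix (Fin 2) (Fin 2) ℂ)
    (Y : Matrix (Fin 2 × Fin 2) (Fin 2 × Fin 2) ℂ) :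
    mconj (X ⊗ₖ Y) = mconj X ⊗ₖ mconj Y := by
  ext p q
  simp [mconj, Matrix.kroneckerMap_apply, _root_.map_mul]

lemma xi_conj (c : Fin 2) :
    (!![0, 1; 1, 0] : Matrix (Fin 2) (Fin 2) ℂ) * Ec c *
      mconj (!![0, 1; 1, 0] : Matrix (Fin 2) (Fin 2) ℂ) = Ec (c + 1) := by
  fin_cases c <;>
  · ext i j
    fin_cases i <;> fin_cases j <;>
      simp [Ec, mconj, Matrix.mul_apply, Matrix.vecMul, dotProduct,
        Fin.sum_univ_two, Matrix.diagonal_apply]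

lemma Kspin_conj (s : Fin 2) :
    Kspin * Ps s * mconj Kspin = -(Ps s) := by
  rw [Kspin_eq]
  fin_cases s <;>
  · ext p q
    obtain ⟨i, x⟩ := p; obtain ⟨j, y⟩ := q
    fin_cases i <;> fin_cases j <;> fin_cases x <;> fin_cases y <;>
      simp [Ps, dgB, pauli2, mconj, Matrix.mul_apply, Fintype.sum_prod_type,
        Fin.sum_univ_two, Matrix.diagonal_apply, Prod.ext_iff] <;>
      norm_num

lemma Kconj (c s : Fin 2) : KE * PE c s * mconj KE = -PE (c + 1) s := by
  rw [KE, PE_eq, PE_eq, mconj_kronecker, ← Matrix.mul_kronecker_mul,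
    ← Matrix.mul_kronecker_mul, xi_conj, Kspin_conj]
  ext p q
  simp [Matrix.kroneckerMap_apply]
/-! ### Decomposition of the representation and the Yukawa operator -/

/-- Lift a flavour matrix to the internal index (trivially on lepto-colour). -/
def liftF (X : Matrix Flav Flav ℂ) : Matrix Intl Intl ℂ :=
  Matrix.of fun p q => if p.1 = q.1 then X p.2 q.2 else 0

lemma rep_eq (a : Alg) :
    rep a = kron (PE 0 0) (liftF (Qr a)) + kron (PE 0 1) (liftF (Ql a))
      + kron (PE 1 0) (Mr a) + kron (PE 1 1) (Ml a) := by
  ext p q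
  obtain ⟨c, s, t, ι⟩ := p; obtain ⟨c', s', t', κ⟩ := q
  fin_cases c <;> fin_cases c' <;> fin_cases s <;> fin_cases s' <;>
    simp [rep, Qmat, Mmat, dgB, liftQ, liftI, liftF, kron_apply, PE,
      Matrix.diagonal_apply, Matrix.add_apply, Prod.ext_iff, ite_and,
      mul_ite, ite_mul] <;>
    (try split_ifs <;> simp)

lemma g5DY_eq (kν ke ku kd : ℂ) :
    g5DY kν ke ku kd
      = kron (PE 0 0) (D0 kν ke ku kd) - kron (PE 0 1) (D0 kν ke ku kd)
        + kron (PE 1 0) ((D0 kν ke ku kd)ᴴ) - kron (PE 1 1) ((D0 kν ke ku kd)ᴴ) := by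
  ext p q
  obtain ⟨c, s, t, ι⟩ := p; obtain ⟨c', s', t', κ⟩ := q
  fin_cases c <;> fin_cases c' <;> fin_cases s <;> fin_cases s' <;>
    simp [g5DY, etaD, dgB, liftI, kron_apply, PE,
      Matrix.diagonal_apply, Matrix.add_apply, Matrix.sub_apply, Matrix.neg_apply,
      Prod.ext_iff, ite_and, mul_ite, ite_mul] <;>
    (try split_ifs <;> simp)
/-! ### The generic internal commutation lemma -/

/-- Structural properties shared by the internal blocks of [γ⁵⊗D_Y, π(b)]_ρ:
diagonal in lepto-colour, off-diagonal in the flavour-pair index, and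
lepto-colour blocks constant on {0} and {1,2,3}. -/
structure GoodD (D : Matrix Intl Intl ℂ) : Prop where
  idiag : ∀ p q : Intl, p.1 ≠ q.1 → D p q = 0
  flav : ∀ p q : Intl, p.2.1 = q.2.1 → D p q = 0
  blk : ∀ i i' : Fin 4, (i = 0 ↔ i' = 0) → ∀ φ φ' : Flav,
    D (i, φ) (i, φ') = D (i', φ) (i', φ')

lemma fin2_cases (u : Fin 2) : u = 0 ∨ u = 1 := by omega

lemma keyComm {D : Matrix Intl Intl ℂ} (hD : GoodD D)
    (N N' : Matrix (Fin 4) (Fin 4) ℂ)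
    (hN : ∀ i j : Fin 4, ¬(i = 0 ↔ j = 0) → N i j = 0)
    (hN' : ∀ i j : Fin 4, ¬(i = 0 ↔ j = 0) → N' i j = 0) :
    D * msect N N' = msect N' N * D := by
  ext p q
  obtain ⟨i, φ⟩ := p; obtain ⟨i', φ'⟩ := q
  have hL : (D * msect N N') (i, φ) (i', φ')
      = D (i, φ) (i, φ') * (if φ'.1 = 0 then N i i' else N' i i') := by
    rw [Matrix.mul_apply, Fintype.sum_prod_type]
    rw [Finset.sum_eq_single i
      (fun j _ hj => Finset.sum_eq_zero fun ψ _ => by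
        rw [hD.idiag (i, φ) (j, ψ) (Ne.symm hj), zero_mul])
      (fun h => absurd (Finset.mem_univ i) h)]
    rw [Finset.sum_eq_single φ'
      (fun ψ _ hψ => by
        have h0 : msect N N' (i, ψ) (i', φ') = 0 := by simp [msect, hψ]
        rw [h0, mul_zero])
      (fun h => absurd (Finset.mem_univ φ') h)]
    simp [msect]
  have hR : (msect N' N * D) (i, φ) (i', φ')
      = (if φ.1 = 0 then N' i i' else N i i') * D (i', φ) (i', φ') := by
    rw [Matrix.mul_apply, Fintype.sum_prod_type]
    rw [Finset.sum_eq_single i'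
      (fun j _ hj => Finset.sum_eq_zero fun ψ _ => by
        rw [hD.idiag (j, ψ) (i', φ') hj, mul_zero])
      (fun h => absurd (Finset.mem_univ i') h)]
    rw [Finset.sum_eq_single φ
      (fun ψ _ hψ => by
        have h0 : msect N' N (i, φ) (i', ψ) = 0 := by simp [msect, Ne.symm hψ]
        rw [h0, zero_mul])
      (fun h => absurd (Finset.mem_univ φ) h)]
    simp [msect]
  rw [hL, hR]
  by_cases hf : φ.1 = φ'.1
  · rw [hD.flav (i, φ) (i, φ') hf, hD.flav (i', φ) (i', φ') hf, zero_mul, mul_zero]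
  · by_cases hb : i = 0 ↔ i' = 0
    · rw [hD.blk i i' hb]
      have hsel : (if φ'.1 = 0 then N i i' else N' i i')
          = (if φ.1 = 0 then N' i i' else N i i') := by
        rcases fin2_cases φ.1 with h1 | h1 <;> rcases fin2_cases φ'.1 with h2 | h2 <;>
          simp_all
      rw [hsel, mul_comm]
    · rw [hN _ _ hb, hN' _ _ hb]
      simp

/-! ### Structural properties of the relevant internal matrices -/

lemma D0_good (kν ke ku kd : ℂ) : GoodD (D0 kν ke ku kd) where
  idiag := by intro p q h; simp [D0, diagI, h]
  flav := by
    intro p q h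
    simp only [D0, diagI, Matrix.of_apply, odB]
    split_ifs <;> simp_all
  blk := by
    intro i i' hb φ φ'
    by_cases h0 : i = 0
    · have h0' : i' = 0 := hb.mp h0
      subst h0; subst h0'; rfl
    · have h0' : ¬i' = 0 := fun h => h0 (hb.mpr h)
      simp [D0, diagI, kdiag, odB, h0, h0']

lemma goodD_conjT {D : Matrix Intl Intl ℂ} (hD : GoodD D) : GoodD (Dᴴ) where
  idiag := by
    intro p q h
    rw [Matrix.conjTranspose_apply, hD.idiag q p (Ne.symm h), star_zero]
  flav := by
    intro p q h
    rw [Matrix.conjTranspose_apply, hD.flav q p h.symm, star_zero]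
  blk := by
    intro i i' hb φ φ'
    rw [Matrix.conjTranspose_apply, Matrix.conjTranspose_apply, hD.blk i i' hb]

lemma goodD_sub {D D' : Matrix Intl Intl ℂ} (h : GoodD D) (h' : GoodD D') :
    GoodD (D - D') where
  idiag := by intro p q hpq; rw [Matrix.sub_apply, h.idiag p q hpq, h'.idiag p q hpq, sub_zero]
  flav := by intro p q hpq; rw [Matrix.sub_apply, h.flav p q hpq, h'.flav p q hpq, sub_zero]
  blk := by intro i i' hb φ φ'; rw [Matrix.sub_apply, Matrix.sub_apply, h.blk i i' hb,
    h'.blk i i' hb]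

lemma mul_liftF_apply {D : Matrix Intl Intl ℂ}
    (hD1 : ∀ p q : Intl, p.1 ≠ q.1 → D p q = 0) (X : Matrix Flav Flav ℂ)
    (i : Fin 4) (φ φ' : Flav) :
    (D * liftF X) (i, φ) (i, φ') = ∑ ψ : Flav, D (i, φ) (i, ψ) * X ψ φ' := by
  rw [Matrix.mul_apply, Fintype.sum_prod_type]
  rw [Finset.sum_eq_single i
    (fun j _ hj => Finset.sum_eq_zero fun ψ _ => by
      rw [hD1 (i, φ) (j, ψ) (Ne.symm hj), zero_mul])
    (fun h => absurd (Finset.mem_univ i) h)]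
  simp [liftF]

lemma liftF_mul_apply {D : Matrix Intl Intl ℂ}
    (hD1 : ∀ p q : Intl, p.1 ≠ q.1 → D p q = 0) (X : Matrix Flav Flav ℂ)
    (i : Fin 4) (φ φ' : Flav) :
    (liftF X * D) (i, φ) (i, φ') = ∑ ψ : Flav, X φ ψ * D (i, ψ) (i, φ') := by
  rw [Matrix.mul_apply, Fintype.sum_prod_type]
  rw [Finset.sum_eq_single i
    (fun j _ hj => Finset.sum_eq_zero fun ψ _ => by
      rw [hD1 (j, ψ) (i, φ') hj, mul_zero])
    (fun h => absurd (Finset.mem_univ i) h)]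
  simp [liftF]

lemma goodD_mul_liftF {D : Matrix Intl Intl ℂ} (hD : GoodD D)
    (X : Matrix Flav Flav ℂ) (hX : ∀ φ ψ : Flav, φ.1 ≠ ψ.1 → X φ ψ = 0) :
    GoodD (D * liftF X) where
  idiag := by
    intro p q h
    rw [Matrix.mul_apply]
    apply Finset.sum_eq_zero; intro r _
    by_cases h1 : p.1 = r.1
    · have h2 : liftF X r q = 0 := by
        have : r.1 ≠ q.1 := h1 ▸ h
        simp [liftF, this]
      rw [h2, mul_zero]
    · rw [hD.idiag p r h1, zero_mul]
  flav := by
    intro p q h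
    rw [Matrix.mul_apply]
    apply Finset.sum_eq_zero; intro r _
    by_cases h1 : p.1 = r.1
    · by_cases h2 : p.2.1 = r.2.1
      · rw [hD.flav p r h2, zero_mul]
      · have h3 : X r.2 q.2 = 0 := hX _ _ fun he => h2 (h.trans he.symm)
        have h4 : liftF X r q = 0 := by simp [liftF, h3]
        rw [h4, mul_zero]
    · rw [hD.idiag p r h1, zero_mul]
  blk := by
    intro i i' hb φ φ'
    rw [mul_liftF_apply hD.idiag X, mul_liftF_apply hD.idiag X]
    exact Finset.sum_congr rfl fun ψ _ => by rw [hD.blk i i' hb]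

lemma goodD_liftF_mul {D : Matrix Intl Intl ℂ} (hD : GoodD D)
    (X : Matrix Flav Flav ℂ) (hX : ∀ φ ψ : Flav, φ.1 ≠ ψ.1 → X φ ψ = 0) :
    GoodD (liftF X * D) where
  idiag := by
    intro p q h
    rw [Matrix.mul_apply]
    apply Finset.sum_eq_zero; intro r _
    by_cases h1 : p.1 = r.1
    · have h2 : D r q = 0 := hD.idiag r q (h1 ▸ h)
      rw [h2, mul_zero]
    · have h2 : liftF X p r = 0 := by simp [liftF, h1]
      rw [h2, zero_mul]
  flav := by
    intro p q h
    rw [Matrix.mul_apply]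
    apply Finset.sum_eq_zero; intro r _
    by_cases h1 : p.1 = r.1
    · by_cases h2 : r.2.1 = q.2.1
      · rw [hD.flav r q h2, mul_zero]
      · have h3 : X p.2 r.2 = 0 := hX _ _ fun he => h2 (he.symm.trans h)
        have h4 : liftF X p r = 0 := by simp [liftF, h3]
        rw [h4, zero_mul]
    · have h2 : liftF X p r = 0 := by simp [liftF, h1]
      rw [h2, zero_mul]
  blk := by
    intro i i' hb φ φ'
    rw [liftF_mul_apply hD.idiag X, liftF_mul_apply hD.idiag X]
    exact Finset.sum_congr rfl fun ψ _ => by rw [hD.blk i i' hb]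

lemma Qr_flavBlock (x : Alg) : ∀ φ ψ : Flav, φ.1 ≠ ψ.1 → Qr x φ ψ = 0 := by
  intro φ ψ h; simp [Qr, dgB, h]

lemma Ql_flavBlock (x : Alg) : ∀ φ ψ : Flav, φ.1 ≠ ψ.1 → Ql x φ ψ = 0 := by
  intro φ ψ h; simp [Ql, dgB, h]

lemma sm4_block (c : ℂ) (m : Matrix (Fin 3) (Fin 3) ℂ) :
    ∀ i j : Fin 4, ¬(i = 0 ↔ j = 0) → sm4 c m i j = 0 := by
  intro i j h
  by_cases hi : i = 0 <;> by_cases hj : j = 0 <;> simp_all [sm4]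

lemma sm4T_block (c : ℂ) (m : Matrix (Fin 3) (Fin 3) ℂ) :
    ∀ i j : Fin 4, ¬(i = 0 ↔ j = 0) → (sm4 c m)ᵀ i j = 0 := by
  intro i j h
  rw [Matrix.transpose_apply]
  exact sm4_block c m j i fun hc => h (Iff.comm.mp hc)

lemma msect_transpose (A B : Matrix (Fin 4) (Fin 4) ℂ) :
    (msect A B)ᵀ = msect Aᵀ Bᵀ := by
  ext p q
  rw [Matrix.transpose_apply]
  simp only [msect, Matrix.of_apply, Matrix.transpose_apply]
  by_cases h : p.2 = q.2
  · rw [if_pos h.symm, if_pos h, h]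
  · rw [if_neg (fun he => h he.symm), if_neg h]
/-! ### J-conjugation of the representation -/

lemma Jconj_rep (x : Alg) :
    Jconj ((rep x)ᴴ)
      = kron (PE 0 0) ((Mr x)ᵀ) + kron (PE 0 1) ((Ml x)ᵀ)
        + kron (PE 1 0) ((liftF (Qr x))ᵀ) + kron (PE 1 1) ((liftF (Ql x))ᵀ) := by
  rw [Jconj, Kmat_eq, rep_eq]
  simp only [Matrix.conjTranspose_add, kron_conjT, PE_conjT]
  simp only [mconj_add, mconj_kron, mconj_PE, mconj_one, mconj_conjT]
  simp only [mul_add, add_mul, kron_mul, one_mul, mul_one]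
  simp only [Kconj]
  simp only [neg_kron, neg_add_rev, neg_neg]
  norm_num
  rw [show (1 : Fin 2) + 1 = 0 from rfl]
  abel
lemma tcomm_g5DY (kν ke ku kd : ℂ) (b : Alg) :
    tcomm (g5DY kν ke ku kd) b
      = kron (PE 0 0) (D0 kν ke ku kd * liftF (Qr b) - liftF (Ql b) * D0 kν ke ku kd)
        - kron (PE 0 1) (D0 kν ke ku kd * liftF (Ql b) - liftF (Qr b) * D0 kν ke ku kd) := by
  have hMb : (D0 kν ke ku kd)ᴴ * Mr b = Ml b * (D0 kν ke ku kd)ᴴ :=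
    keyComm (goodD_conjT (D0_good kν ke ku kd)) _ _
      (sm4_block b.c b.m) (sm4_block b.c' b.m')
  have hMb' : (D0 kν ke ku kd)ᴴ * Ml b = Mr b * (D0 kν ke ku kd)ᴴ :=
    keyComm (goodD_conjT (D0_good kν ke ku kd)) _ _
      (sm4_block b.c' b.m') (sm4_block b.c b.m)
  rw [tcomm, g5DY_eq, rep_eq b, rep_eq b.rho]
  have e1 : Qr b.rho = Ql b := rfl
  have e2 : Ql b.rho = Qr b := rfl
  have e3 : Mr b.rho = Ml b := rfl
  have e4 : Ml b.rho = Mr b := rfl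
  rw [e1, e2, e3, e4]
  simp only [mul_add, add_mul, sub_mul, mul_sub, kron_mul, PE_mul]
  norm_num [zero_kron]
  rw [hMb, hMb', kron_sub, kron_sub]
  abel

theorem statement19' (kν ke ku kd : ℂ) (a b : Alg) :
    tcomm (g5DY kν ke ku kd) b * Jconj ((rep a)ᴴ)
      - Jconj ((rep a.rho)ᴴ) * tcomm (g5DY kν ke ku kd) b = 0 := by
  have hX0 : GoodD (D0 kν ke ku kd * liftF (Qr b) - liftF (Ql b) * D0 kν ke ku kd) :=
    goodD_sub (goodD_mul_liftF (D0_good kν ke ku kd) _ (Qr_flavBlock b))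
      (goodD_liftF_mul (D0_good kν ke ku kd) _ (Ql_flavBlock b))
  have hX1 : GoodD (D0 kν ke ku kd * liftF (Ql b) - liftF (Qr b) * D0 kν ke ku kd) :=
    goodD_sub (goodD_mul_liftF (D0_good kν ke ku kd) _ (Ql_flavBlock b))
      (goodD_liftF_mul (D0_good kν ke ku kd) _ (Qr_flavBlock b))
  have hMrT : (Mr a)ᵀ = msect ((sm4 a.c a.m)ᵀ) ((sm4 a.c' a.m')ᵀ) := msect_transpose _ _
  have hMlT : (Ml a)ᵀ = msect ((sm4 a.c' a.m')ᵀ) ((sm4 a.c a.m)ᵀ) := msect_transpose _ _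
  have hA0 : (D0 kν ke ku kd * liftF (Qr b) - liftF (Ql b) * D0 kν ke ku kd) * (Mr a)ᵀ
      = (Ml a)ᵀ * (D0 kν ke ku kd * liftF (Qr b) - liftF (Ql b) * D0 kν ke ku kd) := by
    rw [hMrT, hMlT]
    exact keyComm hX0 _ _ (sm4T_block a.c a.m) (sm4T_block a.c' a.m')
  have hA1 : (D0 kν ke ku kd * liftF (Ql b) - liftF (Qr b) * D0 kν ke ku kd) * (Ml a)ᵀ
      = (Mr a)ᵀ * (D0 kν ke ku kd * liftF (Ql b) - liftF (Qr b) * D0 kν ke ku kd) := by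
    rw [hMrT, hMlT]
    exact keyComm hX1 _ _ (sm4T_block a.c' a.m') (sm4T_block a.c a.m)
  have er1 : Qr a.rho = Ql a := rfl
  have er2 : Ql a.rho = Qr a := rfl
  have er3 : Mr a.rho = Ml a := rfl
  have er4 : Ml a.rho = Mr a := rfl
  rw [tcomm_g5DY, Jconj_rep a, Jconj_rep a.rho, er1, er2, er3, er4]
  have hA0' : D0 kν ke ku kd * liftF (Qr b) * (Mr a)ᵀ - liftF (Ql b) * D0 kν ke ku kd * (Mr a)ᵀ
      = (Ml a)ᵀ * (D0 kν ke ku kd * liftF (Qr b)) - (Ml a)ᵀ * (liftF (Ql b) * D0 kν ke ku kd) := by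
    rw [← sub_mul, ← mul_sub]; exact hA0
  have hA1' : D0 kν ke ku kd * liftF (Ql b) * (Ml a)ᵀ - liftF (Qr b) * D0 kν ke ku kd * (Ml a)ᵀ
      = (Mr a)ᵀ * (D0 kν ke ku kd * liftF (Ql b)) - (Mr a)ᵀ * (liftF (Qr b) * D0 kν ke ku kd) := by
    rw [← sub_mul, ← mul_sub]; exact hA1
  simp only [mul_add, add_mul, sub_mul, mul_sub, kron_mul, PE_mul]
  norm_num [zero_kron]
  rw [hA0', hA1']
  abel

/-- the twisted first-order condition for the Yukawa part of the Dirac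
operator: [[γ⁵⊗D_Y, π(b)]_ρ, a°]_{ρ°} = 0, with a° = J·π(a)†·J⁻¹ and
ρ°(a°) = J·π(ρ(a))†·J⁻¹. -/
theorem statement19 (kν ke ku kd : ℂ) (a b : Alg) :
    tcomm (g5DY kν ke ku kd) b * Jconj ((rep a)ᴴ)
      - Jconj ((rep a.rho)ᴴ) * tcomm (g5DY kν ke ku kd) b = 0 := by
  exact statement19' kν ke ku kd a b


end TwistSM
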